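/- For all integers n, h, k: J(n+h)·j(n+k) − J(n)·j(n+h+k) = (−1)^n · 2^n · J(h)·j(k), where (−1)^n and 2^n denote powers in ℚ with integer exponent n. -/

import Mathlib

lemma aux_closed (f : ℤ → ℚ) (α β : ℚ)
    (h0 : f 0 = α + β) (h1 : f 1 = 2 * α - β)
    (hr : ∀ n : ℤ, f n = f (n - 1) + 2 * f (n - 2)) :
    ∀ n : ℤ, f n = α * (2:ℚ) ^ n + β * (-1:ℚ) ^ n := by
  have key : ∀ n : ℤ, (f n = α * (2:ℚ) ^ n + β * (-1:ℚ) ^ n) ∧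
      (f (n+1) = α * (2:ℚ) ^ (n+1) + β * (-1:ℚ) ^ (n+1)) := by
    intro n
    induction n using Int.induction_on with
    | zero => simp [h0, h1]; ring
    | succ i ih =>
      obtain ⟨ih1, ih2⟩ := ih
      refine ⟨ih2, ?_⟩
      have := hr ((i:ℤ) + 1 + 1)
      simp only [add_sub_cancel_right] at this
      have e : ((i:ℤ) + 1 + 1 - 2) = (i:ℤ) := by ring
      rw [e] at this
      rw [this, ih1, ih2]
      simp only [zpow_add₀ (by norm_num : (2:ℚ) ≠ 0),
        zpow_add₀ (by norm_num : (-1:ℚ) ≠ 0), zpow_one]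
      ring
    | pred i ih =>
      obtain ⟨ih1, ih2⟩ := ih
      have e : (-(i:ℤ) - 1 + 1) = -(i:ℤ) := by ring
      rw [e]
      refine ⟨?_, ih1⟩
      have := hr (-(i:ℤ) + 1)
      have e1 : (-(i:ℤ) + 1 - 1) = -(i:ℤ) := by ring
      have e2 : (-(i:ℤ) + 1 - 2) = -(i:ℤ) - 1 := by ring
      rw [e1, e2] at this
      have h2 : f (-(i:ℤ) - 1) = (f (-(i:ℤ) + 1) - f (-(i:ℤ))) / 2 := by
        rw [this]; ring
      rw [h2, ih2, ih1]
      simp only [zpow_add₀ (by norm_num : (2:ℚ) ≠ 0),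
        zpow_add₀ (by norm_num : (-1:ℚ) ≠ 0),
        zpow_sub₀ (by norm_num : (2:ℚ) ≠ 0),
        zpow_sub₀ (by norm_num : (-1:ℚ) ≠ 0), zpow_one]
      field_simp
      ring
  exact fun n => (key n).1

/-- `J(n+h)·j(n+k) − J(n)·j(n+h+k) = (−1)^n·2^n·J(h)·j(k)` for Jacobsthal `J`
and Jacobsthal–Lucas `j` extended to all integers. -/
theorem stmt_11 (J j : ℤ → ℚ)
    (hJ0 : J 0 = 0) (hJ1 : J 1 = 1)
    (hJ : ∀ n : ℤ, J n = J (n - 1) + 2 * J (n - 2))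
    (hj0 : j 0 = 2) (hj1 : j 1 = 1)
    (hj : ∀ n : ℤ, j n = j (n - 1) + 2 * j (n - 2))
    (n h k : ℤ) :
    J (n + h) * j (n + k) - J n * j (n + h + k)
      = (-1 : ℚ) ^ n * (2 : ℚ) ^ n * J h * j k := by
  have cJ := aux_closed J (1/3) (-(1/3)) (by rw [hJ0]; ring) (by rw [hJ1]; ring) hJ
  have cj := aux_closed j 1 1 (by rw [hj0]; ring) (by rw [hj1]; ring) hj
  simp only [cJ, cj, zpow_add₀ (by norm_num : (2:ℚ) ≠ 0),
    zpow_add₀ (by norm_num : (-1:ℚ) ≠ 0)]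
  ring
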